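/- Let 0 < α ≤ 1, K ≥ 0 and f ∈ Σ(α,K). Then for every j ∈ ℕ, sup_{x ∈ [0,1)} |f(x) − 2^j ∫_{I_{j,⌊2^j x⌋}} f(t) dt| ≤ Σ_{l=j}^{∞} 2^{l/2} * max_{0 ≤ k < 2^l} |∫₀¹ f ψ_{l,k}|, where the series on the right-hand side converges. -/

import Mathlib

open MeasureTheory

/-- The dyadic interval `I_{l,k} = [k 2^{-l}, (k+1) 2^{-l})`. -/
def dyadicI (l k : ℕ) : Set ℝ := Set.Ico ((k : ℝ) / 2 ^ l) (((k : ℝ) + 1) / 2 ^ l)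

/-- The Haar wavelet `ψ_{l,k}(x) = 2^{l/2} (1_{[1/2,1)} - 1_{[0,1/2)})(2^l x - k)`. -/
noncomputable def haar (l k : ℕ) (x : ℝ) : ℝ :=
  2 ^ ((l : ℝ) / 2) *
    ((Set.Ico (1 / 2 : ℝ) 1).indicator 1 (2 ^ l * x - k) -
     (Set.Ico (0 : ℝ) (1 / 2 : ℝ)).indicator 1 (2 ^ l * x - k))

namespace Stmt6Aux

open scoped ENNReal NNReal

variable {α K : ℝ} {f : ℝ → ℝ}

lemma contOn (hα : 0 < α) (hK : 0 ≤ K)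
    (hf : ∀ x ∈ Set.Ico (0:ℝ) 1, ∀ y ∈ Set.Ico (0:ℝ) 1, |f x - f y| ≤ K * |x - y| ^ α) :
    ContinuousOn f (Set.Ico 0 1) := by
  have hH : HolderOnWith K.toNNReal α.toNNReal f (Set.Ico 0 1) := by
    intro x hx y hy
    have h2 : (K.toNNReal : ℝ≥0∞) = ENNReal.ofReal K := rfl
    rw [edist_dist, edist_dist, Real.dist_eq, Real.dist_eq, h2,
      Real.coe_toNNReal α hα.le,
      ENNReal.ofReal_rpow_of_nonneg (abs_nonneg _) hα.le,
      ← ENNReal.ofReal_mul hK]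
    exact ENNReal.ofReal_le_ofReal (hf x hx y hy)
  exact hH.continuousOn (Real.toNNReal_pos.mpr hα)

lemma bddf (hα : 0 < α) (hK : 0 ≤ K)
    (hf : ∀ x ∈ Set.Ico (0:ℝ) 1, ∀ y ∈ Set.Ico (0:ℝ) 1, |f x - f y| ≤ K * |x - y| ^ α) :
    ∀ x ∈ Set.Ico (0:ℝ) 1, |f x| ≤ |f 0| + K := by
  intro x hx
  have h0 : (0:ℝ) ∈ Set.Ico (0:ℝ) 1 := by constructor <;> norm_num
  have h1 := hf x hx 0 h0
  have hle : |x - 0| ^ α ≤ 1 := by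
    apply Real.rpow_le_one (abs_nonneg _) _ hα.le
    rw [sub_zero, abs_of_nonneg hx.1]
    exact hx.2.le
  have h2 : K * |x - 0| ^ α ≤ K := mul_le_of_le_one_right hK hle
  calc |f x| = |(f x - f 0) + f 0| := by ring_nf
    _ ≤ |f x - f 0| + |f 0| := abs_add_le _ _
    _ ≤ K + |f 0| := by linarith
    _ = |f 0| + K := by ring

lemma intOn (hα : 0 < α) (hK : 0 ≤ K)
    (hf : ∀ x ∈ Set.Ico (0:ℝ) 1, ∀ y ∈ Set.Ico (0:ℝ) 1, |f x - f y| ≤ K * |x - y| ^ α) :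
    IntegrableOn f (Set.Ico (0:ℝ) 1) := by
  haveI : IsFiniteMeasure (volume.restrict (Set.Ico (0:ℝ) 1)) :=
    ⟨by rw [Measure.restrict_apply_univ]; simp [Real.volume_Ico]⟩
  refine ⟨(contOn hα hK hf).aestronglyMeasurable measurableSet_Ico, ?_⟩
  apply HasFiniteIntegral.of_bounded (C := |f 0| + K)
  filter_upwards [ae_restrict_mem measurableSet_Ico] with x hx
  exact bddf hα hK hf x hx

lemma split (f : ℝ → ℝ) {a m b : ℝ} (ham : a ≤ m) (hmb : m ≤ b)
    (h1 : IntegrableOn f (Set.Ico a m)) (h2 : IntegrableOn f (Set.Ico m b)) :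
    ∫ t in Set.Ico a b, f t = (∫ t in Set.Ico a m, f t) + ∫ t in Set.Ico m b, f t := by
  rw [← Set.Ico_union_Ico_eq_Ico ham hmb,
    setIntegral_union Set.Ico_disjoint_Ico_same measurableSet_Ico h1 h2]

lemma floor_bounds {x : ℝ} (hx : x ∈ Set.Ico (0:ℝ) 1) (l : ℕ) :
    ((⌊(2:ℝ)^l * x⌋₊ : ℝ)) ≤ 2^l * x ∧ (2:ℝ)^l * x < (⌊(2:ℝ)^l * x⌋₊ : ℝ) + 1 ∧
      ⌊(2:ℝ)^l * x⌋₊ < 2^l := by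
  have hx0 : (0:ℝ) ≤ 2^l * x := mul_nonneg (by positivity) hx.1
  refine ⟨Nat.floor_le hx0, Nat.lt_floor_add_one _, ?_⟩
  rw [Nat.floor_lt hx0]
  push_cast
  calc (2:ℝ)^l * x < 2^l * 1 := by
        apply mul_lt_mul_of_pos_left hx.2 (by positivity)
    _ = 2^l := by ring

lemma dyadic_subset {l k : ℕ} (hk : k < 2^l) :
    Set.Ico ((k:ℝ)/2^l) (((k:ℝ)+1)/2^l) ⊆ Set.Ico (0:ℝ) 1 := by
  have hpos : (0:ℝ) < 2^l := by positivity
  apply Set.Ico_subset_Ico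
  · positivity
  · rw [div_le_one hpos]
    have : (k:ℝ) + 1 ≤ (2:ℝ)^l := by exact_mod_cast Nat.succ_le_of_lt hk
    linarith

lemma int_sub_const_bound (hα : 0 < α) (hK : 0 ≤ K)
    (hf : ∀ x ∈ Set.Ico (0:ℝ) 1, ∀ y ∈ Set.Ico (0:ℝ) 1, |f x - f y| ≤ K * |x - y| ^ α)
    {u v p d : ℝ} (huv : u ≤ v) (hsub : Set.Ico u v ⊆ Set.Ico (0:ℝ) 1)
    (hp : p ∈ Set.Ico (0:ℝ) 1) (hdist : ∀ t ∈ Set.Ico u v, |t - p| ≤ d) :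
    |(∫ t in Set.Ico u v, f t) - (v - u) * f p| ≤ K * d ^ α * (v - u) := by
  have hint : IntegrableOn f (Set.Ico u v) := (intOn hα hK hf).mono_set hsub
  have hconst : IntegrableOn (fun _ : ℝ => f p) (Set.Ico u v) :=
    integrableOn_const (by rw [Real.volume_Ico]; exact ENNReal.ofReal_ne_top)
  have hvol : (volume (Set.Ico u v)).toReal = v - u := by
    rw [Real.volume_Ico, ENNReal.toReal_ofReal (by linarith)]
  have hc : (v - u) * f p = ∫ _t in Set.Ico u v, f p := by
    rw [setIntegral_const, measureReal_def, hvol, smul_eq_mul]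
  rw [hc, ← integral_sub hint hconst]
  have := norm_setIntegral_le_of_norm_le_const (μ := volume) (s := Set.Ico u v)
    (f := fun t => f t - f p) (C := K * d ^ α)
    (by rw [Real.volume_Ico]; exact ENNReal.ofReal_lt_top)
    (fun t ht => by
      rw [Real.norm_eq_abs]
      calc |f t - f p| ≤ K * |t - p| ^ α := hf t (hsub ht) p hp
        _ ≤ K * d ^ α := by
            apply mul_le_mul_of_nonneg_left _ hK
            exact Real.rpow_le_rpow (abs_nonneg _) (hdist t ht) hα.le)
  rw [Real.norm_eq_abs, measureReal_def, hvol] at this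
  exact this

lemma coef_eq (hint : IntegrableOn f (Set.Ico (0:ℝ) 1)) {l k : ℕ} (hk : k < 2^l) :
    (∫ t in Set.Ico (0:ℝ) 1, f t * haar l k t) =
      2 ^ ((l:ℝ)/2) * ((∫ t in Set.Ico (((k:ℝ)+1/2)/2^l) (((k:ℝ)+1)/2^l), f t)
        - ∫ t in Set.Ico ((k:ℝ)/2^l) (((k:ℝ)+1/2)/2^l), f t) := by
  have hpos : (0:ℝ) < 2^l := by positivity
  set a : ℝ := (k:ℝ)/2^l with ha
  set m : ℝ := ((k:ℝ)+1/2)/2^l with hm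
  set b : ℝ := ((k:ℝ)+1)/2^l with hb
  have hmem1 : ∀ t : ℝ, ((2:ℝ)^l * t - k ∈ Set.Ico (1/2:ℝ) 1) ↔ t ∈ Set.Ico m b := by
    intro t
    simp only [Set.mem_Ico, hm, hb, div_le_iff₀ hpos, lt_div_iff₀ hpos]
    constructor <;> rintro ⟨h1, h2⟩ <;> constructor <;> nlinarith
  have hmem2 : ∀ t : ℝ, ((2:ℝ)^l * t - k ∈ Set.Ico (0:ℝ) (1/2:ℝ)) ↔ t ∈ Set.Ico a m := by
    intro t
    simp only [Set.mem_Ico, ha, hm, div_le_iff₀ hpos, lt_div_iff₀ hpos]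
    constructor <;> rintro ⟨h1, h2⟩ <;> constructor <;> nlinarith
  have hpt : ∀ t : ℝ, f t * haar l k t =
      2 ^ ((l:ℝ)/2) * ((Set.Ico m b).indicator f t - (Set.Ico a m).indicator f t) := by
    intro t
    have e1 : f t * (Set.Ico (1/2:ℝ) 1).indicator 1 ((2:ℝ)^l * t - k)
        = (Set.Ico m b).indicator f t := by
      by_cases h : t ∈ Set.Ico m b
      · rw [Set.indicator_of_mem h, Set.indicator_of_mem ((hmem1 t).2 h)]
        simp
      · rw [Set.indicator_of_notMem h, Set.indicator_of_notMem (fun hc => h ((hmem1 t).1 hc))]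
        simp
    have e2 : f t * (Set.Ico (0:ℝ) (1/2:ℝ)).indicator 1 ((2:ℝ)^l * t - k)
        = (Set.Ico a m).indicator f t := by
      by_cases h : t ∈ Set.Ico a m
      · rw [Set.indicator_of_mem h, Set.indicator_of_mem ((hmem2 t).2 h)]
        simp
      · rw [Set.indicator_of_notMem h, Set.indicator_of_notMem (fun hc => h ((hmem2 t).1 hc))]
        simp
    rw [haar, ← e1, ← e2]
    ring
  have hab : a ≤ m := by
    rw [ha, hm, div_le_div_iff_of_pos_right hpos]; linarith
  have hmb : m ≤ b := by
    rw [hm, hb, div_le_div_iff_of_pos_right hpos]; linarith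
  have hsub_ab : Set.Ico a b ⊆ Set.Ico (0:ℝ) 1 := dyadic_subset hk
  have hsub1 : Set.Ico a m ⊆ Set.Ico (0:ℝ) 1 := (Set.Ico_subset_Ico_right hmb).trans hsub_ab
  have hsub2 : Set.Ico m b ⊆ Set.Ico (0:ℝ) 1 := (Set.Ico_subset_Ico_left hab).trans hsub_ab
  have I1 : Integrable ((Set.Ico m b).indicator f) (volume.restrict (Set.Ico (0:ℝ) 1)) :=
    ((hint.mono_set hsub2).integrable_indicator measurableSet_Ico).restrict
  have I2 : Integrable ((Set.Ico a m).indicator f) (volume.restrict (Set.Ico (0:ℝ) 1)) :=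
    ((hint.mono_set hsub1).integrable_indicator measurableSet_Ico).restrict
  simp_rw [hpt]
  rw [integral_const_mul, integral_sub I1 I2,
    setIntegral_indicator measurableSet_Ico, setIntegral_indicator measurableSet_Ico,
    Set.inter_eq_self_of_subset_right hsub2, Set.inter_eq_self_of_subset_right hsub1]

lemma rpow_helper (α : ℝ) (l : ℕ) : ((1:ℝ)/2^l) ^ α = ((2:ℝ)^(-α:ℝ))^l := by
  have h1 : ((1:ℝ)/2^l) = (2:ℝ)^(-(l:ℝ)) := by
    rw [Real.rpow_neg two_pos.le, Real.rpow_natCast, one_div]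
  rw [h1, ← Real.rpow_natCast ((2:ℝ)^(-α:ℝ)) l, ← Real.rpow_mul two_pos.le,
    ← Real.rpow_mul two_pos.le]
  congr 1
  ring

lemma coef_bound (hα : 0 < α) (hK : 0 ≤ K)
    (hf : ∀ x ∈ Set.Ico (0:ℝ) 1, ∀ y ∈ Set.Ico (0:ℝ) 1, |f x - f y| ≤ K * |x - y| ^ α)
    {l k : ℕ} (hk : k < 2^l) :
    |∫ t in Set.Ico (0:ℝ) 1, f t * haar l k t| ≤
      2 ^ ((l:ℝ)/2) * (K * ((2:ℝ)^(-α:ℝ))^l / 2^l) := by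
  have hint := intOn hα hK hf
  have hpos : (0:ℝ) < 2^l := by positivity
  set a : ℝ := (k:ℝ)/2^l with ha
  set m : ℝ := ((k:ℝ)+1/2)/2^l with hm
  set b : ℝ := ((k:ℝ)+1)/2^l with hb
  have hab : a ≤ m := by
    rw [ha, hm, div_le_div_iff_of_pos_right hpos]; linarith
  have hmb : m < b := by
    rw [hm, hb, div_lt_div_iff_of_pos_right hpos]; linarith
  have hsub_ab : Set.Ico a b ⊆ Set.Ico (0:ℝ) 1 := dyadic_subset hk
  have hsub1 : Set.Ico a m ⊆ Set.Ico (0:ℝ) 1 := (Set.Ico_subset_Ico_right hmb.le).trans hsub_ab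
  have hsub2 : Set.Ico m b ⊆ Set.Ico (0:ℝ) 1 := (Set.Ico_subset_Ico_left hab).trans hsub_ab
  have hm01 : m ∈ Set.Ico (0:ℝ) 1 := hsub2 ⟨le_refl m, hmb⟩
  have hlen1 : m - a = 1/2^(l+1) := by
    rw [ha, hm]; field_simp; ring
  have hlen2 : b - m = 1/2^(l+1) := by
    rw [hb, hm]; field_simp; ring
  have h2l : (1:ℝ)/2^(l+1) ≤ 1/2^l := by
    apply one_div_le_one_div_of_le hpos
    apply pow_le_pow_right₀ one_le_two (Nat.le_succ l)
  have B1 := int_sub_const_bound hα hK hf hab hsub1 hm01 (d := 1/2^l)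
    (fun t ht => by
      rw [abs_le]
      constructor
      · have := ht.1; simp only [neg_le_sub_iff_le_add]; linarith
      · have := ht.2; linarith [one_div_pos.2 (show (0:ℝ) < 2^(l+1) by positivity)])
  have B2 := int_sub_const_bound hα hK hf hmb.le hsub2 hm01 (d := 1/2^l)
    (fun t ht => by
      rw [abs_le]
      constructor
      · have := ht.1; linarith [one_div_pos.2 (show (0:ℝ) < 2^l by positivity)]
      · have := ht.2; linarith)
  rw [coef_eq hint hk, abs_mul, abs_of_pos (Real.rpow_pos_of_pos two_pos _)]
  apply mul_le_mul_of_nonneg_left _ (Real.rpow_pos_of_pos two_pos _).le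
  have key : |(∫ t in Set.Ico m b, f t) - ∫ t in Set.Ico a m, f t|
      ≤ K * ((1:ℝ)/2^l) ^ α * (1/2^l) := by
    calc |(∫ t in Set.Ico m b, f t) - ∫ t in Set.Ico a m, f t|
        = |((∫ t in Set.Ico m b, f t) - (b - m) * f m)
            - ((∫ t in Set.Ico a m, f t) - (m - a) * f m)| := by
          rw [hlen1, hlen2]; congr 1; ring
      _ ≤ |(∫ t in Set.Ico m b, f t) - (b - m) * f m|
            + |(∫ t in Set.Ico a m, f t) - (m - a) * f m| := abs_sub _ _
      _ ≤ K * ((1:ℝ)/2^l) ^ α * (b - m) + K * ((1:ℝ)/2^l) ^ α * (m - a) :=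
          add_le_add B2 B1
      _ = K * ((1:ℝ)/2^l) ^ α * (1/2^l) := by
          rw [hlen1, hlen2]; field_simp; ring
  rw [rpow_helper] at key
  calc |(∫ t in Set.Ico m b, f t) - ∫ t in Set.Ico a m, f t|
      ≤ K * ((2:ℝ)^(-α:ℝ))^l * (1/2^l) := key
    _ = K * ((2:ℝ)^(-α:ℝ))^l / 2^l := by ring

/-- The dyadic average of `f` at scale `l` around `x`. -/
noncomputable def avg (f : ℝ → ℝ) (l : ℕ) (x : ℝ) : ℝ :=
  2^l * ∫ t in dyadicI l ⌊(2:ℝ)^l * x⌋₊, f t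

lemma avg_close (hα : 0 < α) (hK : 0 ≤ K)
    (hf : ∀ x ∈ Set.Ico (0:ℝ) 1, ∀ y ∈ Set.Ico (0:ℝ) 1, |f x - f y| ≤ K * |x - y| ^ α)
    {x : ℝ} (hx : x ∈ Set.Ico (0:ℝ) 1) (l : ℕ) :
    |f x - avg f l x| ≤ K * ((2:ℝ)^(-α:ℝ))^l := by
  obtain ⟨h1, h2, hk⟩ := floor_bounds hx l
  have hpos : (0:ℝ) < 2^l := by positivity
  set k := ⌊(2:ℝ)^l * x⌋₊ with hkdef
  set a : ℝ := (k:ℝ)/2^l with ha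
  set b : ℝ := ((k:ℝ)+1)/2^l with hb
  have hax : a ≤ x := by rw [ha, div_le_iff₀ hpos]; linarith
  have hxb : x < b := by rw [hb, lt_div_iff₀ hpos]; linarith
  have hab : a ≤ b := hax.trans hxb.le
  have hba : b - a = 1/2^l := by rw [ha, hb]; field_simp; ring
  have B := int_sub_const_bound hα hK hf hab (dyadic_subset hk) hx (d := 1/2^l)
    (fun t ht => by
      rw [abs_le]
      have := ht.1; have := ht.2
      constructor <;> [linarith; linarith])
  have hrw : f x - avg f l x = 2^l * ((b - a) * f x - ∫ t in Set.Ico a b, f t) := by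
    rw [avg, hba]
    show f x - 2^l * ∫ t in Set.Ico a b, f t = _
    field_simp
  rw [hrw, abs_mul, abs_of_pos hpos, abs_sub_comm]
  calc 2^l * |(∫ t in Set.Ico a b, f t) - (b - a) * f x|
      ≤ 2^l * (K * ((1:ℝ)/2^l) ^ α * (b - a)) := mul_le_mul_of_nonneg_left B hpos.le
    _ = K * ((1:ℝ)/2^l) ^ α := by rw [hba]; field_simp
    _ = K * ((2:ℝ)^(-α:ℝ))^l := by rw [rpow_helper]

lemma avg_step (hα : 0 < α) (hK : 0 ≤ K)
    (hf : ∀ x ∈ Set.Ico (0:ℝ) 1, ∀ y ∈ Set.Ico (0:ℝ) 1, |f x - f y| ≤ K * |x - y| ^ α)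
    {x : ℝ} (hx : x ∈ Set.Ico (0:ℝ) 1) (l : ℕ) :
    |avg f (l+1) x - avg f l x| ≤
      2^((l:ℝ)/2) * |∫ t in Set.Ico (0:ℝ) 1, f t * haar l ⌊(2:ℝ)^l * x⌋₊ t| := by
  have hint := intOn hα hK hf
  obtain ⟨h1, h2, hk⟩ := floor_bounds hx l
  have hpos : (0:ℝ) < 2^l := by positivity
  set k := ⌊(2:ℝ)^l * x⌋₊ with hkdef
  set a : ℝ := (k:ℝ)/2^l with ha
  set m : ℝ := ((k:ℝ)+1/2)/2^l with hm
  set b : ℝ := ((k:ℝ)+1)/2^l with hb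
  have hab : a ≤ m := by
    rw [ha, hm, div_le_div_iff_of_pos_right hpos]; linarith
  have hmb : m ≤ b := by
    rw [hm, hb, div_le_div_iff_of_pos_right hpos]; linarith
  have hsub_ab : Set.Ico a b ⊆ Set.Ico (0:ℝ) 1 := dyadic_subset hk
  have hsub1 : Set.Ico a m ⊆ Set.Ico (0:ℝ) 1 := (Set.Ico_subset_Ico_right hmb).trans hsub_ab
  have hsub2 : Set.Ico m b ⊆ Set.Ico (0:ℝ) 1 := (Set.Ico_subset_Ico_left hab).trans hsub_ab
  set I1 : ℝ := ∫ t in Set.Ico a m, f t with hI1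
  set I2 : ℝ := ∫ t in Set.Ico m b, f t with hI2
  have havgl : avg f l x = 2^l * (I1 + I2) := by
    rw [avg, ← hkdef]
    show 2^l * ∫ t in Set.Ico a b, f t = _
    rw [split f hab hmb (hint.mono_set hsub1) (hint.mono_set hsub2)]
  have habs : 2^((l:ℝ)/2) * |∫ t in Set.Ico (0:ℝ) 1, f t * haar l k t|
      = 2^l * |I2 - I1| := by
    rw [coef_eq hint hk, abs_mul, abs_of_pos (Real.rpow_pos_of_pos two_pos _), ← mul_assoc,
      ← Real.rpow_add two_pos, show (l:ℝ)/2 + (l:ℝ)/2 = (l:ℝ) by ring, Real.rpow_natCast,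
      hI1, hI2]
  rw [habs]
  have hp2 : (2:ℝ)^(l+1) = 2^l * 2 := pow_succ 2 l
  by_cases hxm : x < m
  · have hxm' : x * 2^l < (k:ℝ) + 1/2 := by
      rw [hm, lt_div_iff₀ hpos] at hxm; exact hxm
    have hfl : ⌊(2:ℝ)^(l+1) * x⌋₊ = 2*k := by
      rw [Nat.floor_eq_iff (mul_nonneg (by positivity) hx.1)]
      push_cast
      constructor <;> nlinarith
    have hIeq : dyadicI (l+1) (2*k) = Set.Ico a m := by
      rw [dyadicI, ha, hm]
      congr 1
      all_goals (push_cast; rw [hp2]; field_simp; try ring)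
    have havg1 : avg f (l+1) x = 2^(l+1) * I1 := by
      rw [avg, hfl, hIeq, hI1]
    have : (2:ℝ)^(l+1) * I1 - 2^l * (I1 + I2) = -(2^l * (I2 - I1)) := by
      rw [hp2]; ring
    rw [havg1, havgl, this, abs_neg, abs_mul, abs_of_pos hpos]
  · push_neg at hxm
    have hxm' : (k:ℝ) + 1/2 ≤ x * 2^l := by
      rw [hm, div_le_iff₀ hpos] at hxm; exact hxm
    have hfl : ⌊(2:ℝ)^(l+1) * x⌋₊ = 2*k+1 := by
      rw [Nat.floor_eq_iff (mul_nonneg (by positivity) hx.1)]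
      push_cast
      constructor <;> nlinarith
    have hIeq : dyadicI (l+1) (2*k+1) = Set.Ico m b := by
      rw [dyadicI, hm, hb]
      congr 1
      all_goals (push_cast; rw [hp2]; field_simp; try ring)
    have havg1 : avg f (l+1) x = 2^(l+1) * I2 := by
      rw [avg, hfl, hIeq, hI2]
    have : (2:ℝ)^(l+1) * I2 - 2^l * (I1 + I2) = 2^l * (I2 - I1) := by
      rw [hp2]; ring
    rw [havg1, havgl, this, abs_mul, abs_of_pos hpos]

end Stmt6Aux

/-- If `f ∈ Σ(α,K)` with `0 < α ≤ 1`, `K ≥ 0`, then for every `j`,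
`sup_{x ∈ [0,1)} |f(x) - 2^j ∫_{I_{j,⌊2^j x⌋}} f| ≤ Σ_{l ≥ j} 2^{l/2} max_{k<2^l} |∫₀¹ f ψ_{l,k}|`,
the series on the right being convergent (we index `l = j + m`, `m ∈ ℕ`). -/
theorem stmt_6 (α K : ℝ) (hα : 0 < α) (hα1 : α ≤ 1) (hK : 0 ≤ K) (f : ℝ → ℝ)
    (hf : ∀ x ∈ Set.Ico (0 : ℝ) 1, ∀ y ∈ Set.Ico (0 : ℝ) 1, |f x - f y| ≤ K * |x - y| ^ α)
    (j : ℕ) :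
    (Summable fun m : ℕ => 2 ^ (((j + m : ℕ) : ℝ) / 2) *
        ⨆ k : Fin (2 ^ (j + m)), |∫ t in Set.Ico (0 : ℝ) 1, f t * haar (j + m) (k : ℕ) t|) ∧
    ∀ x ∈ Set.Ico (0 : ℝ) 1,
      |f x - 2 ^ j * ∫ t in dyadicI j ⌊2 ^ j * x⌋₊, f t| ≤
        ∑' m : ℕ, 2 ^ (((j + m : ℕ) : ℝ) / 2) *
          ⨆ k : Fin (2 ^ (j + m)), |∫ t in Set.Ico (0 : ℝ) 1, f t * haar (j + m) (k : ℕ) t| := by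
  classical
  set g : ℕ → ℝ := fun m : ℕ => 2 ^ (((j + m : ℕ) : ℝ) / 2) *
      ⨆ k : Fin (2 ^ (j + m)), |∫ t in Set.Ico (0 : ℝ) 1, f t * haar (j + m) (k : ℕ) t| with hg
  set r : ℝ := (2:ℝ)^(-α:ℝ) with hrdef
  have hr0 : 0 < r := Real.rpow_pos_of_pos two_pos _
  have hr1 : r < 1 := by
    rw [hrdef]
    exact Real.rpow_lt_one_of_one_lt_of_neg one_lt_two (neg_neg_of_pos hα)
  have hSnn : ∀ l : ℕ, 0 ≤ ⨆ k : Fin (2^l), |∫ t in Set.Ico (0:ℝ) 1, f t * haar l (k:ℕ) t| :=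
    fun l => Real.iSup_nonneg fun k => abs_nonneg _
  have hSle : ∀ l : ℕ, (⨆ k : Fin (2^l), |∫ t in Set.Ico (0:ℝ) 1, f t * haar l (k:ℕ) t|)
      ≤ 2^((l:ℝ)/2) * (K * r^l / 2^l) := by
    intro l
    haveI : Nonempty (Fin (2^l)) := ⟨⟨0, by positivity⟩⟩
    exact ciSup_le fun k => Stmt6Aux.coef_bound hα hK hf k.2
  have hgnn : ∀ m : ℕ, 0 ≤ g m := fun m =>
    mul_nonneg (Real.rpow_pos_of_pos two_pos _).le (hSnn _)
  have hgle : ∀ m : ℕ, g m ≤ (K * r^j) * r^m := by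
    intro m
    have h1 := hSle (j+m)
    have h2 : (2:ℝ) ^ (((j + m : ℕ) : ℝ) / 2) * (2^(((j+m:ℕ):ℝ)/2) * (K * r^(j+m) / 2^(j+m)))
        = (K * r^j) * r^m := by
      rw [← mul_assoc, ← Real.rpow_add two_pos,
        show ((j+m:ℕ):ℝ)/2 + ((j+m:ℕ):ℝ)/2 = ((j+m:ℕ):ℝ) by ring, Real.rpow_natCast,
        pow_add]
      field_simp
      ring
    calc g m ≤ 2 ^ (((j + m : ℕ) : ℝ) / 2) * (2^(((j+m:ℕ):ℝ)/2) * (K * r^(j+m) / 2^(j+m))) :=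
          mul_le_mul_of_nonneg_left h1 (Real.rpow_pos_of_pos two_pos _).le
      _ = (K * r^j) * r^m := h2
  have hsum : Summable g := Summable.of_nonneg_of_le hgnn hgle
    ((summable_geometric_of_lt_one hr0.le hr1).mul_left (K*r^j))
  refine ⟨hsum, ?_⟩
  intro x hx
  have key : ∀ N : ℕ, |f x - Stmt6Aux.avg f j x| ≤ K * r^(j+N) + ∑' m, g m := by
    intro N
    have tel : Stmt6Aux.avg f (j+N) x - Stmt6Aux.avg f (j+0) x
        = ∑ m ∈ Finset.range N, (Stmt6Aux.avg f (j+(m+1)) x - Stmt6Aux.avg f (j+m) x) := by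
      exact (Finset.sum_range_sub (fun m => Stmt6Aux.avg f (j+m) x) N).symm
    have hstep : ∀ m : ℕ, |Stmt6Aux.avg f (j+(m+1)) x - Stmt6Aux.avg f (j+m) x| ≤ g m := by
      intro m
      have h := Stmt6Aux.avg_step hα hK hf hx (j+m)
      refine h.trans ?_
      rw [hg]
      have hk0 : ⌊(2:ℝ)^(j+m) * x⌋₊ < 2^(j+m) := (Stmt6Aux.floor_bounds hx (j+m)).2.2
      have hbdd : BddAbove (Set.range fun k : Fin (2^(j+m)) =>
          |∫ t in Set.Ico (0:ℝ) 1, f t * haar (j+m) (k:ℕ) t|) :=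
        (Set.finite_range _).bddAbove
      have hic := le_ciSup hbdd (⟨⌊(2:ℝ)^(j+m) * x⌋₊, hk0⟩ : Fin (2^(j+m)))
      exact mul_le_mul_of_nonneg_left hic (Real.rpow_pos_of_pos two_pos _).le
    calc |f x - Stmt6Aux.avg f j x|
        ≤ |f x - Stmt6Aux.avg f (j+N) x| + |Stmt6Aux.avg f (j+N) x - Stmt6Aux.avg f j x| := by
          have e : f x - Stmt6Aux.avg f j x
              = (f x - Stmt6Aux.avg f (j+N) x) + (Stmt6Aux.avg f (j+N) x - Stmt6Aux.avg f j x) := by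
            ring
          rw [e]; exact abs_add_le _ _
      _ ≤ K * r^(j+N) + ∑' m, g m := by
          apply add_le_add (Stmt6Aux.avg_close hα hK hf hx (j+N))
          have e0 : Stmt6Aux.avg f (j+0) x = Stmt6Aux.avg f j x := by norm_num
          rw [← e0, tel]
          calc |∑ m ∈ Finset.range N, (Stmt6Aux.avg f (j+(m+1)) x - Stmt6Aux.avg f (j+m) x)|
              ≤ ∑ m ∈ Finset.range N, |Stmt6Aux.avg f (j+(m+1)) x - Stmt6Aux.avg f (j+m) x| :=
                Finset.abs_sum_le_sum_abs _ _
            _ ≤ ∑ m ∈ Finset.range N, g m := Finset.sum_le_sum (fun m _ => hstep m)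
            _ ≤ ∑' m, g m := Summable.sum_le_tsum _ (fun m _ => hgnn m) hsum
  have hlim : Filter.Tendsto (fun N : ℕ => K * r^(j+N) + ∑' m, g m) Filter.atTop
      (nhds (0 + ∑' m, g m)) := by
    apply Filter.Tendsto.add_const
    have e : (fun N : ℕ => K * r^(j+N)) = fun N : ℕ => (K * r^j) * r^N := by
      funext N; rw [pow_add]; ring
    rw [e]
    have := (tendsto_pow_atTop_nhds_zero_of_lt_one hr0.le hr1).const_mul (K*r^j)
    simpa using this
  have hfinal := ge_of_tendsto hlim (Filter.Eventually.of_forall key)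
  rw [zero_add] at hfinal
  exact hfinal
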